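/- Let f : [a,b] → ℝ be monotone non-increasing and let g(s) := limsup_{t→s}(f(t)−f(s))/(t−s) (the upper derivative). Then g is measurable and g(s) ≤ 0 for all s, hence g is integrable as an extended-real-valued non-positive function, and ∫_a^b g(s) ds ≥ f(b) − f(a). -/

import Mathlib

open Filter Set MeasureTheory Topology

/-- The canonical map `EReal → ℝ≥0∞`, sending `⊤` to `⊤` and everything
nonpositive to `0`. -/
noncomputable def erealToENNReal (x : EReal) : ENNReal :=
  if x = ⊤ then ⊤ else ENNReal.ofReal x.toReal

/-- The upper derivative of `f` at `s` relative to `[a,b]`, as an extended real. -/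
noncomputable def upperDeriv (a b : ℝ) (f : ℝ → ℝ) (s : ℝ) : EReal :=
  Filter.limsup (fun t => ((f t - f s) / (t - s) : EReal))
    (nhdsWithin s (Set.Icc a b \ {s}))



noncomputable def extFun (a b : ℝ) (f : ℝ → ℝ) : ℝ → ℝ := fun x => -f (max a (min b x))

lemma extFun_mem {a b : ℝ} (hab : a ≤ b) (x : ℝ) : max a (min b x) ∈ Icc a b :=
  ⟨le_max_left _ _, max_le hab (min_le_left _ _)⟩

lemma extFun_mono {a b : ℝ} (hab : a ≤ b) {f : ℝ → ℝ} (hmono : AntitoneOn f (Icc a b)) :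
    Monotone (extFun a b f) := by
  intro x y hxy
  have h1 : max a (min b x) ≤ max a (min b y) :=
    max_le_max le_rfl (min_le_min le_rfl hxy)
  have := hmono (extFun_mem hab x) (extFun_mem hab y) h1
  simpa [extFun] using this

lemma extFun_eq {a b : ℝ} {f : ℝ → ℝ} {x : ℝ} (hx : x ∈ Icc a b) :
    extFun a b f x = -f x := by
  have : max a (min b x) = x := by
    rw [min_eq_right hx.2, max_eq_right hx.1]
  simp [extFun, this]

lemma extFun_of_ge {a b : ℝ} (hab : a ≤ b) {f : ℝ → ℝ} {x : ℝ} (hx : b ≤ x) :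
    extFun a b f x = -f b := by
  have : max a (min b x) = b := by rw [min_eq_left hx, max_eq_right hab]
  simp [extFun, this]

lemma nebot_icc {a b : ℝ} (hab : a < b) {s : ℝ} (hs : s ∈ Icc a b) :
    (nhdsWithin s (Icc a b \ {s})).NeBot := by
  rcases lt_or_ge s b with h | h
  · have hsub : Ioo s b ⊆ Icc a b \ {s} := fun t ht =>
      ⟨⟨hs.1.trans ht.1.le, ht.2.le⟩, ne_of_gt ht.1⟩
    have : s ∈ closure (Ioo s b) := by
      rw [closure_Ioo h.ne]; exact ⟨le_rfl, h.le⟩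
    exact (mem_closure_iff_nhdsWithin_neBot.1 this).mono (nhdsWithin_mono _ hsub)
  · have hsb : s = b := le_antisymm hs.2 h
    have hlt : a < s := hsb ▸ hab
    have hsub : Ioo a s ⊆ Icc a b \ {s} := fun t ht =>
      ⟨⟨ht.1.le, ht.2.le.trans hs.2⟩, ne_of_lt ht.2⟩
    have : s ∈ closure (Ioo a s) := by
      rw [closure_Ioo hlt.ne]; exact ⟨hlt.le, le_rfl⟩
    exact (mem_closure_iff_nhdsWithin_neBot.1 this).mono (nhdsWithin_mono _ hsub)

lemma upperDeriv_congr_ext {a b : ℝ} (hab : a ≤ b) {f : ℝ → ℝ} {s : ℝ} (hs : s ∈ Icc a b) :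
    upperDeriv a b f s =
      Filter.limsup (fun t => (((extFun a b f s - extFun a b f t) / (t - s) : ℝ) : EReal))
        (nhdsWithin s (Icc a b \ {s})) := by
  apply Filter.limsup_congr
  filter_upwards [eventually_mem_nhdsWithin] with t ht
  rw [← EReal.coe_sub, ← EReal.coe_sub, ← EReal.coe_div]
  congr 1
  rw [extFun_eq hs, extFun_eq ht.1]
  ring

lemma upperDeriv_of_hasDerivAt {a b : ℝ} (hab : a < b) {f : ℝ → ℝ} {s : ℝ}
    (hs : s ∈ Icc a b) {d : ℝ} (hd : HasDerivAt (extFun a b f) d s) :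
    upperDeriv a b f s = ((-d : ℝ) : EReal) := by
  rw [upperDeriv_congr_ext hab.le hs]
  have hneb := nebot_icc hab hs
  have hslope : Tendsto (slope (extFun a b f) s) (nhdsWithin s {s}ᶜ) (nhds d) :=
    hasDerivAt_iff_tendsto_slope.1 hd
  have hle : nhdsWithin s (Icc a b \ {s}) ≤ nhdsWithin s {s}ᶜ :=
    nhdsWithin_mono _ (fun t ht => ht.2)
  have h2 : Tendsto (fun t => (((extFun a b f s - extFun a b f t) / (t - s) : ℝ) : EReal))
      (nhdsWithin s (Icc a b \ {s})) (nhds ((-d : ℝ) : EReal)) := by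
    have : Tendsto (fun t => -(slope (extFun a b f) s t)) (nhdsWithin s (Icc a b \ {s}))
        (nhds (-d)) := ((hslope.mono_left hle).neg)
    have hcoe := (continuous_coe_real_ereal.tendsto (-d)).comp this
    apply hcoe.congr
    intro t
    simp only [Function.comp_apply]
    congr 1
    rw [slope_def_field]
    ring
  exact h2.limsup_eq




lemma upperDeriv_nonpos {a b : ℝ} {f : ℝ → ℝ} (hmono : AntitoneOn f (Icc a b))
    {s : ℝ} (hs : s ∈ Icc a b) : upperDeriv a b f s ≤ 0 := by
  apply Filter.limsup_le_of_le (by isBoundedDefault)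
  filter_upwards [eventually_mem_nhdsWithin] with t ht
  rw [← EReal.coe_sub, ← EReal.coe_sub, ← EReal.coe_div]
  have : (f t - f s) / (t - s) ≤ 0 := by
    rcases lt_or_gt_of_ne ht.2 with h | h
    · exact div_nonpos_of_nonneg_of_nonpos (by linarith [hmono ht.1 hs (le_of_lt h)])
        (by linarith)
    · exact div_nonpos_of_nonpos_of_nonneg (by linarith [hmono hs ht.1 (le_of_lt h)])
        (by linarith)
  exact_mod_cast this

lemma upperDeriv_of_not_mem {a b : ℝ} {f : ℝ → ℝ} {s : ℝ} (hs : s ∉ Icc a b) :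
    upperDeriv a b f s = ⊥ := by
  have : nhdsWithin s (Icc a b \ {s}) = ⊥ := by
    rw [← not_neBot, ← mem_closure_iff_nhdsWithin_neBot]
    intro h
    exact hs (isClosed_Icc.closure_subset ((closure_mono diff_subset) h))
  rw [upperDeriv, this, Filter.limsup_bot]

lemma measurable_erealToENNReal : Measurable erealToENNReal := by
  unfold erealToENNReal
  apply Measurable.ite
  · have : {x : EReal | x = ⊤} = {⊤} := by ext x; simp
    rw [this]; exact measurableSet_singleton _
  · exact measurable_const
  · exact ENNReal.measurable_ofReal.comp measurable_ereal_toReal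

example : Measurable (fun x : EReal => -x) := measurable_neg





lemma sup_countable_reduction {a b : ℝ} (hab : a < b) {f : ℝ → ℝ}
    (hmono : AntitoneOn f (Icc a b))
    {e : ℕ → ℝ}
    (hTe : {x | ¬ContinuousAt (extFun a b f) x} ∪ range (Rat.cast : ℚ → ℝ) ∪ {a, b} = range e)
    {s : ℝ} (hs : s ∈ Icc a b) {r : ℝ} (hr : 0 < r) :
    (⨆ t ∈ Metric.ball s r ∩ (Icc a b \ {s}), ((f t - f s) / (t - s) : EReal)) =
      ⨆ m : ℕ, if (|e m - s| < r ∧ e m ∈ Icc a b ∧ e m ≠ s) then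
        (((extFun a b f s - extFun a b f (e m)) / (e m - s) : ℝ) : EReal) else ⊥ := by
  set F := extFun a b f with hFdef
  set T : Set ℝ := {x | ¬ContinuousAt F x} ∪ range (Rat.cast : ℚ → ℝ) ∪ {a, b} with hTdef
  have hval : ∀ t ∈ Icc a b, ((f t : EReal) - (f s : EReal)) / ((t : EReal) - (s : EReal)) =
      (((F s - F t) / (t - s) : ℝ) : EReal) := by
    intro t ht
    rw [← EReal.coe_sub, ← EReal.coe_sub, ← EReal.coe_div]
    congr 1
    rw [hFdef, extFun_eq hs, extFun_eq ht]
    ring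
  apply le_antisymm
  · refine iSup₂_le fun t₀ ht₀ => ?_
    obtain ⟨hball, hIcc, hne⟩ : t₀ ∈ Metric.ball s r ∧ t₀ ∈ Icc a b ∧ t₀ ≠ s :=
      ⟨ht₀.1, ht₀.2.1, ht₀.2.2⟩
    by_cases ht₀T : t₀ ∈ T
    · rw [hTe] at ht₀T
      obtain ⟨m, hm⟩ := ht₀T
      have hcond : |e m - s| < r ∧ e m ∈ Icc a b ∧ e m ≠ s := by
        rw [hm]; exact ⟨by rwa [← Real.dist_eq], hIcc, hne⟩
      calc ((f t₀ : EReal) - (f s : EReal)) / ((t₀ : EReal) - (s : EReal))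
          = (((F s - F (e m)) / (e m - s) : ℝ) : EReal) := by rw [hm]; exact hval t₀ hIcc
        _ ≤ _ := by
            refine le_trans (le_of_eq ?_) (le_iSup _ m)
            rw [if_pos hcond]
    · -- t₀ continuous point, not a or b, so interior; approximate by rationals
      have hcont : ContinuousAt F t₀ := by
        by_contra h
        exact ht₀T (Or.inl (Or.inl h))
      have ht₀a : t₀ ≠ a := fun h => ht₀T (Or.inr (Or.inl h))
      have ht₀b : t₀ ≠ b := fun h => ht₀T (Or.inr (Or.inr h))
      have ht₀Ioo : t₀ ∈ Ioo a b :=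
        ⟨lt_of_le_of_ne hIcc.1 (Ne.symm ht₀a), lt_of_le_of_ne hIcc.2 ht₀b⟩
      set U : Set ℝ := Ioo a b ∩ Metric.ball s r ∩ {s}ᶜ with hUdef
      have hUopen : IsOpen U := ((isOpen_Ioo.inter Metric.isOpen_ball).inter
        (isOpen_compl_singleton))
      have ht₀U : t₀ ∈ U := ⟨⟨ht₀Ioo, hball⟩, hne⟩
      have hcl : t₀ ∈ closure (U ∩ range (Rat.cast : ℚ → ℝ)) :=
        (Rat.denseRange_cast (𝕜 := ℝ)).open_subset_closure_inter hUopen ht₀U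
      have hnb : (nhdsWithin t₀ (U ∩ range (Rat.cast : ℚ → ℝ))).NeBot :=
        mem_closure_iff_nhdsWithin_neBot.1 hcl
      set v : ℝ → ℝ := fun t => (F s - F t) / (t - s) with hvdef
      have hvcont : ContinuousAt v t₀ := by
        apply ContinuousAt.div
        · exact continuousAt_const.sub hcont
        · exact continuousAt_id.sub continuousAt_const
        · exact sub_ne_zero.2 hne
      have htend : Tendsto (fun t => ((v t : ℝ) : EReal))
          (nhdsWithin t₀ (U ∩ range (Rat.cast : ℚ → ℝ))) (nhds ((v t₀ : ℝ) : EReal)) :=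
        (continuous_coe_real_ereal.tendsto _).comp hvcont.continuousWithinAt
      have hbound : ∀ᶠ t in nhdsWithin t₀ (U ∩ range (Rat.cast : ℚ → ℝ)),
          ((v t : ℝ) : EReal) ≤ ⨆ m : ℕ, if (|e m - s| < r ∧ e m ∈ Icc a b ∧ e m ≠ s) then
            (((F s - F (e m)) / (e m - s) : ℝ) : EReal) else ⊥ := by
        filter_upwards [eventually_mem_nhdsWithin] with t ht
        have htT : t ∈ T := Or.inl (Or.inr ht.2)
        rw [hTe] at htT
        obtain ⟨m, hm⟩ := htT
        have htIcc : t ∈ Icc a b := ⟨ht.1.1.1.1.le, ht.1.1.1.2.le⟩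
        have hcond : |e m - s| < r ∧ e m ∈ Icc a b ∧ e m ≠ s := by
          rw [hm]; exact ⟨by rw [← Real.dist_eq]; exact ht.1.1.2, htIcc, ht.1.2⟩
        refine le_trans (le_of_eq ?_) (le_iSup _ m)
        rw [if_pos hcond, hm]
      have := le_of_tendsto htend hbound
      calc ((f t₀ : EReal) - (f s : EReal)) / ((t₀ : EReal) - (s : EReal))
          = ((v t₀ : ℝ) : EReal) := hval t₀ hIcc
        _ ≤ _ := this
  · refine iSup_le fun m => ?_
    by_cases hcond : |e m - s| < r ∧ e m ∈ Icc a b ∧ e m ≠ s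
    · rw [if_pos hcond]
      have hmem : e m ∈ Metric.ball s r ∩ (Icc a b \ {s}) :=
        ⟨by rw [Metric.mem_ball, Real.dist_eq]; exact hcond.1, hcond.2.1, hcond.2.2⟩
      refine le_trans (le_of_eq ?_) (le_iSup₂ (e m) hmem)
      exact (hval (e m) hcond.2.1).symm
    · rw [if_neg hcond]; exact bot_le

lemma measurable_upperDeriv {a b : ℝ} (hab : a < b) {f : ℝ → ℝ}
    (hmono : AntitoneOn f (Icc a b)) : Measurable (upperDeriv a b f) := by
  set F := extFun a b f with hFdef
  have hFm : Monotone F := by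
    intro x y hxy
    have h1 : max a (min b x) ≤ max a (min b y) :=
      max_le_max le_rfl (min_le_min le_rfl hxy)
    have hmem : ∀ z : ℝ, max a (min b z) ∈ Icc a b := fun z =>
      ⟨le_max_left _ _, max_le hab.le (min_le_left _ _)⟩
    have := hmono (hmem x) (hmem y) h1
    simpa [hFdef, extFun] using this
  have hFmeas : Measurable F := hFm.measurable
  set T : Set ℝ := {x | ¬ContinuousAt F x} ∪ range (Rat.cast : ℚ → ℝ) ∪ {a, b} with hTdef
  have hTc : T.Countable :=
    ((hFm.countable_not_continuousAt.union (countable_range _)).union (by simp))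
  have hTne : T.Nonempty := ⟨a, Or.inr (Or.inl rfl)⟩
  obtain ⟨e, hTe⟩ := hTc.exists_eq_range hTne
  -- the candidate measurable function
  set G : ℝ → EReal := fun s => ⨅ n : ℕ, ⨆ m : ℕ,
    if (|e m - s| < ((n : ℝ) + 1)⁻¹ ∧ e m ∈ Icc a b ∧ e m ≠ s) then
      (((F s - F (e m)) / (e m - s) : ℝ) : EReal) else ⊥ with hGdef
  have hG : Measurable G := by
    apply Measurable.iInf
    intro n
    apply Measurable.iSup
    intro m
    apply Measurable.ite
    · by_cases hm : e m ∈ Icc a b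
      · have : {s : ℝ | |e m - s| < ((n : ℝ) + 1)⁻¹ ∧ e m ∈ Icc a b ∧ e m ≠ s} =
            {s : ℝ | |e m - s| < ((n : ℝ) + 1)⁻¹} ∩ {e m}ᶜ := by
          ext s; simp [hm, eq_comm, and_comm]
        rw [this]
        refine MeasurableSet.inter ?_ (measurableSet_singleton _).compl
        exact (isOpen_lt ((continuous_const.sub continuous_id).abs) continuous_const).measurableSet
      · have : {s : ℝ | |e m - s| < ((n : ℝ) + 1)⁻¹ ∧ e m ∈ Icc a b ∧ e m ≠ s} = ∅ := by
          ext s; simp [hm]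
        rw [this]; exact MeasurableSet.empty
    · refine Continuous.measurable continuous_coe_real_ereal |>.comp ?_
      exact ((hFmeas.sub measurable_const).div (measurable_const.sub measurable_id))
    · exact measurable_const
  have hkey : upperDeriv a b f = (Icc a b).piecewise G (fun _ => (⊥ : EReal)) := by
    funext s
    by_cases hs : s ∈ Icc a b
    · rw [Set.piecewise_eq_of_mem _ _ _ hs]
      have hbasis := (Metric.nhdsWithin_basis_ball
        (x := s) (s := Icc a b \ {s})).limsup_eq_iInf_iSup
        (u := fun t => ((f t - f s) / (t - s) : EReal))
      rw [upperDeriv, hbasis]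
      have hXmono : ∀ r₁ r₂ : ℝ, r₁ ≤ r₂ →
          (⨆ t ∈ Metric.ball s r₁ ∩ (Icc a b \ {s}), ((f t - f s) / (t - s) : EReal)) ≤
          (⨆ t ∈ Metric.ball s r₂ ∩ (Icc a b \ {s}), ((f t - f s) / (t - s) : EReal)) := by
        intro r₁ r₂ h
        refine iSup₂_le fun t ht => ?_
        exact le_iSup₂ (f := fun (t : ℝ) (_ : t ∈ Metric.ball s r₂ ∩ (Icc a b \ {s})) =>
          ((f t - f s) / (t - s) : EReal)) t ⟨Metric.ball_subset_ball h ht.1, ht.2⟩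
      apply le_antisymm
      · refine le_iInf fun n => ?_
        refine le_trans (iInf₂_le (((n : ℝ) + 1)⁻¹) (by positivity)) ?_
        rw [sup_countable_reduction hab hmono hTe hs (by positivity)]
      · refine le_iInf₂ fun ε hε => ?_
        obtain ⟨n, hn⟩ := exists_nat_gt ε⁻¹
        refine le_trans (iInf_le _ n) ?_
        rw [← sup_countable_reduction hab hmono hTe hs (by positivity)]
        refine hXmono _ _ ?_
        rw [inv_le_comm₀ (by positivity) hε]
        exact le_trans hn.le (by linarith [lt_add_one (n : ℝ)])
    · rw [Set.piecewise_eq_of_notMem _ _ _ hs]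
      have hbot : nhdsWithin s (Icc a b \ {s}) = ⊥ := by
        rw [← not_neBot, ← mem_closure_iff_nhdsWithin_neBot]
        intro h
        exact hs (isClosed_Icc.closure_subset ((closure_mono diff_subset) h))
      rw [upperDeriv, hbot, Filter.limsup_bot]
  rw [hkey]
  exact Measurable.piecewise measurableSet_Icc hG measurable_const


lemma integral_bound_aux {a b : ℝ} (hab : a < b) {f : ℝ → ℝ} (hmono : AntitoneOn f (Icc a b)) :
    ((f b - f a : ℝ) : EReal) ≤
      -((∫⁻ s in Set.Icc a b, erealToENNReal (-(upperDeriv a b f s))) : ENNReal) := by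
  set F := extFun a b f with hFdef
  have hFm : Monotone F := extFun_mono hab.le hmono
  have hFmeas : Measurable F := hFm.measurable
  set c : ℕ → ℝ := fun n => ((n : ℝ) + 1)⁻¹ with hcdef
  have hc : ∀ n, 0 < c n := fun n => by positivity
  set q : ℕ → ℝ → ℝ := fun n s => ((n : ℝ) + 1) * (F (s + c n) - F s) with hqdef
  have hqnn : ∀ n s, 0 ≤ q n s := fun n s =>
    mul_nonneg (by positivity) (sub_nonneg.2 (hFm (by linarith [hc n])))
  have hqmeas : ∀ n, Measurable (q n) := fun n =>
    measurable_const.mul ((hFmeas.comp (measurable_id.add_const _)).sub hFmeas)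
  -- integrability
  have hFint : ∀ u v : ℝ, IntervalIntegrable F volume u v := fun u v =>
    hFm.intervalIntegrable
  have hqint : ∀ n, IntegrableOn (q n) (Icc a b) volume := by
    intro n
    have h1 : IntegrableOn F (Icc a b) volume :=
      (hFm.locallyIntegrable).integrableOn_isCompact isCompact_Icc
    have h2 : IntegrableOn (fun s => F (s + c n)) (Icc a b) volume := by
      have : Monotone (fun s => F (s + c n)) := fun x y hxy => hFm (by linarith)
      exact (this.locallyIntegrable).integrableOn_isCompact isCompact_Icc
    exact ((h2.sub h1).const_mul _)
  -- a.e. identification with liminf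
  have hae : ∀ᵐ s ∂(volume.restrict (Icc a b)),
      erealToENNReal (-(upperDeriv a b f s)) =
        liminf (fun n => ENNReal.ofReal (q n s)) atTop := by
    rw [ae_restrict_iff' measurableSet_Icc]
    filter_upwards [hFm.ae_differentiableAt] with s hdiff hs
    have hder : HasDerivAt F (deriv F s) s := hdiff.hasDerivAt
    set d := deriv F s with hddef
    -- sequence tendsto
    have hc0 : Tendsto (fun n : ℕ => c n) atTop (nhds 0) := by
      have : Tendsto (fun n : ℕ => 1 / ((n : ℝ) + 1)) atTop (nhds 0) :=
        tendsto_one_div_add_atTop_nhds_zero_nat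
      simpa [hcdef, one_div] using this
    have hts : Tendsto (fun n => s + c n) atTop (nhdsWithin s {s}ᶜ) := by
      apply tendsto_nhdsWithin_of_tendsto_nhds_of_eventually_within
      · simpa using tendsto_const_nhds.add hc0
      · exact Eventually.of_forall fun n => by
          simp only [mem_compl_iff, mem_singleton_iff]
          intro h
          have := hc n
          nlinarith [congrArg (fun x => x - s) h]
    have hq : Tendsto (fun n => q n s) atTop (nhds d) := by
      have hslope := hasDerivAt_iff_tendsto_slope.1 hder
      refine (hslope.comp hts).congr fun n => ?_
      show slope F s (s + c n) = q n s
      rw [slope_def_field, add_sub_cancel_left, div_eq_inv_mul, hcdef]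
      simp [inv_inv]
      rfl
    have hd0 : 0 ≤ d := ge_of_tendsto' hq fun n => hqnn n s
    have hud : upperDeriv a b f s = ((-d : ℝ) : EReal) :=
      upperDeriv_of_hasDerivAt hab hs hder
    have h1 : erealToENNReal (-(upperDeriv a b f s)) = ENNReal.ofReal d := by
      rw [hud, ← EReal.coe_neg, neg_neg]
      simp [erealToENNReal]
    rw [h1]
    exact (((ENNReal.continuous_ofReal.tendsto d).comp hq).liminf_eq).symm
  -- setup bound
  have hIle : (∫⁻ s in Icc a b, erealToENNReal (-(upperDeriv a b f s))) ≤
      ENNReal.ofReal (f a - f b) := by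
    calc (∫⁻ s in Icc a b, erealToENNReal (-(upperDeriv a b f s)))
        = ∫⁻ s in Icc a b, liminf (fun n => ENNReal.ofReal (q n s)) atTop :=
          lintegral_congr_ae hae
      _ ≤ liminf (fun n => ∫⁻ s in Icc a b, ENNReal.ofReal (q n s)) atTop :=
          lintegral_liminf_le fun n => ENNReal.measurable_ofReal.comp (hqmeas n)
      _ ≤ ENNReal.ofReal (f a - f b) := by
          refine Filter.liminf_le_of_frequently_le ?_ (by isBoundedDefault)
          apply Frequently.of_forall
          intro n
          rw [← ofReal_integral_eq_lintegral_ofReal (hqint n)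
            (Eventually.of_forall fun s => hqnn n s)]
          apply ENNReal.ofReal_le_ofReal
          -- real integral bound
          have hFa : F a = -f a := extFun_eq ⟨le_rfl, hab.le⟩
          have hFb : F b = -f b := extFun_eq ⟨hab.le, le_rfl⟩
          have hIcc : (∫ s in Icc a b, q n s) = ∫ s in a..b, q n s := by
            rw [intervalIntegral.integral_of_le hab.le, ← integral_Icc_eq_integral_Ioc]
          rw [hIcc]
          have hsplit1 : (∫ s in a..(a + c n), F s) + (∫ s in (a + c n)..(b + c n), F s)
              = ∫ s in a..(b + c n), F s :=
            intervalIntegral.integral_add_adjacent_intervals (hFint _ _) (hFint _ _)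
          have hsplit2 : (∫ s in a..b, F s) + (∫ s in b..(b + c n), F s)
              = ∫ s in a..(b + c n), F s :=
            intervalIntegral.integral_add_adjacent_intervals (hFint _ _) (hFint _ _)
          have hIb : (∫ s in b..(b + c n), F s) = c n * F b := by
            have hcongr : EqOn F (fun _ => F b) (uIcc b (b + c n)) := by
              intro x hx
              rw [uIcc_of_le (by linarith [hc n])] at hx
              have : F x = -f b := extFun_of_ge hab.le hx.1
              rw [this, hFb]
            rw [intervalIntegral.integral_congr hcongr]
            simp [smul_eq_mul]
          have hIa : c n * F a ≤ (∫ s in a..(a + c n), F s) := by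
            have := intervalIntegral.integral_mono_on (a := a) (b := a + c n)
              (μ := volume) (f := fun _ => F a) (g := F)
              (by linarith [hc n]) intervalIntegrable_const (hFint _ _)
              (fun x hx => hFm hx.1)
            simpa [smul_eq_mul, mul_comm] using this
          have hshiftint : IntervalIntegrable (fun s => F (s + c n)) volume a b := by
            have hm2 : Monotone (fun s => F (s + c n)) := fun x y hxy => hFm (by linarith)
            exact hm2.intervalIntegrable
          have hqexp : (∫ s in a..b, q n s) =
              ((n : ℝ) + 1) * ((∫ s in (a + c n)..(b + c n), F s) - ∫ s in a..b, F s) := by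
            have h1 : (∫ s in a..b, q n s) =
                ((n : ℝ) + 1) * ∫ s in a..b, (F (s + c n) - F s) :=
              intervalIntegral.integral_const_mul _ _
            have h2 : (∫ s in a..b, (F (s + c n) - F s)) =
                (∫ s in a..b, F (s + c n)) - ∫ s in a..b, F s :=
              intervalIntegral.integral_sub hshiftint (hFint a b)
            have h3 : (∫ s in a..b, F (s + c n)) = ∫ s in (a + c n)..(b + c n), F s :=
              intervalIntegral.integral_comp_add_right F (c n)
            rw [h1, h2, h3]
          have hone : ((n : ℝ) + 1) * c n = 1 := mul_inv_cancel₀ (by positivity)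
          calc (∫ s in a..b, q n s)
              = ((n : ℝ) + 1) * ((∫ s in (a + c n)..(b + c n), F s) - ∫ s in a..b, F s) :=
                hqexp
            _ = ((n : ℝ) + 1) * ((∫ s in b..(b + c n), F s) - ∫ s in a..(a + c n), F s) := by
                congr 1
                linarith [hsplit1, hsplit2]
            _ ≤ ((n : ℝ) + 1) * (c n * F b - c n * F a) := by
                apply mul_le_mul_of_nonneg_left _ (by positivity)
                linarith [hIa, hIb]
            _ = F b - F a := by linear_combination (F b - F a) * hone
            _ = f a - f b := by rw [hFa, hFb]; ring
  -- conclude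
  have hcoe : ((∫⁻ s in Icc a b, erealToENNReal (-(upperDeriv a b f s))) : EReal) ≤
      ((ENNReal.ofReal (f a - f b) : ENNReal) : EReal) := by
    exact_mod_cast hIle
  have hfab : f b ≤ f a := hmono ⟨le_rfl, hab.le⟩ ⟨hab.le, le_rfl⟩ hab.le
  have h2 : ((ENNReal.ofReal (f a - f b) : ENNReal) : EReal) = ((f a - f b : ℝ) : EReal) := by
    rw [EReal.coe_ennreal_ofReal, max_eq_left (by linarith)]
  rw [h2] at hcoe
  have := EReal.neg_le_neg_iff.2 hcoe
  calc ((f b - f a : ℝ) : EReal) = -((f a - f b : ℝ) : EReal) := by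
        rw [← EReal.coe_neg]; norm_num
    _ ≤ _ := this

/-- For a monotone non-increasing `f : [a,b] → ℝ`, the upper derivative `g` is
measurable and non-positive, hence integrable as an extended-real-valued
non-positive function, and `∫_a^b g(s) ds ≥ f(b) − f(a)` (the integral of `g`
being minus the `ℝ≥0∞`-valued integral of `−g`). -/
theorem antitone_upper_derivative_integral_bound
    (a b : ℝ) (hab : a < b) (f : ℝ → ℝ)
    (hmono : AntitoneOn f (Set.Icc a b)) :
    Measurable (fun s => erealToENNReal (-(upperDeriv a b f s))) ∧
    (∀ s ∈ Set.Icc a b, upperDeriv a b f s ≤ 0) ∧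
    ((f b - f a : ℝ) : EReal) ≤
      -((∫⁻ s in Set.Icc a b, erealToENNReal (-(upperDeriv a b f s))) : ENNReal) := by
  refine ⟨?_, ?_, ?_⟩
  · exact measurable_erealToENNReal.comp ((measurable_upperDeriv hab hmono).neg)
  · exact fun s hs => upperDeriv_nonpos hmono hs
  · exact integral_bound_aux hab hmono
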